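/- Let a : ℝⁿ → ℝⁿ satisfy (a(u₁) − a(u₂))·(u₁ − u₂) ≥ m‖u₁ − u₂‖² and ‖a(u₁) − a(u₂)‖ ≤ M‖u₁ − u₂‖ for all u₁, u₂ ∈ ℝⁿ, where M ≥ m > 0. Then a is a bijection from ℝⁿ onto ℝⁿ, and its inverse b := a⁻¹ satisfies (b(v₁) − b(v₂))·(v₁ − v₂) ≥ (m/M²)‖v₁ − v₂‖² and ‖b(v₁) − b(v₂)‖ ≤ (1/m)‖v₁ − v₂‖ for all v₁, v₂ ∈ ℝⁿ. -/

import Mathlib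

open RealInnerProductSpace

theorem stmt5 {n : ℕ} (a : EuclideanSpace ℝ (Fin n) → EuclideanSpace ℝ (Fin n))
    (m M : ℝ) (hm : 0 < m) (hmM : m ≤ M)
    (hmono : ∀ u₁ u₂, ⟪a u₁ - a u₂, u₁ - u₂⟫ ≥ m * ‖u₁ - u₂‖ ^ 2)
    (hLip : ∀ u₁ u₂, ‖a u₁ - a u₂‖ ≤ M * ‖u₁ - u₂‖) :
    Function.Bijective a ∧ ∃ b : EuclideanSpace ℝ (Fin n) → EuclideanSpace ℝ (Fin n),
      (∀ v, a (b v) = v) ∧ (∀ u, b (a u) = u) ∧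
      (∀ v₁ v₂, ⟪b v₁ - b v₂, v₁ - v₂⟫ ≥ (m / M ^ 2) * ‖v₁ - v₂‖ ^ 2) ∧
      (∀ v₁ v₂, ‖b v₁ - b v₂‖ ≤ (1 / m) * ‖v₁ - v₂‖) := by
  have hM : 0 < M := lt_of_lt_of_le hm hmM
  have hinj : Function.Injective a := by
    intro u₁ u₂ h
    have h1 := hmono u₁ u₂
    rw [h, sub_self, inner_zero_left] at h1
    have h2 : ‖u₁ - u₂‖ ^ 2 = 0 :=
      le_antisymm (by nlinarith) (sq_nonneg _)
    have h3 : ‖u₁ - u₂‖ = 0 := by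
      have := pow_eq_zero_iff (n := 2) (by norm_num) |>.mp h2
      exact this
    exact sub_eq_zero.mp (norm_eq_zero.mp h3)
  have hsurj : Function.Surjective a := by
    intro y
    set t : ℝ := m / M ^ 2 with ht
    have htpos : 0 < t := div_pos hm (by positivity)
    have htM : t * M ^ 2 = m := by rw [ht]; field_simp
    set c : ℝ := 1 - m ^ 2 / M ^ 2 with hcdef
    have hm2M2 : m ^ 2 ≤ M ^ 2 := by nlinarith
    have hc0 : 0 ≤ c := by
      have : m ^ 2 / M ^ 2 ≤ 1 := by
        rw [div_le_one (by positivity)]; exact hm2M2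
      simp only [hcdef]; linarith
    have hc1 : c < 1 := by
      have : 0 < m ^ 2 / M ^ 2 := by positivity
      simp only [hcdef]; linarith
    set T : EuclideanSpace ℝ (Fin n) → EuclideanSpace ℝ (Fin n) :=
      fun u => u - t • (a u - y) with hT
    have key : ∀ u₁ u₂, ‖T u₁ - T u₂‖ ^ 2 ≤ c * ‖u₁ - u₂‖ ^ 2 := by
      intro u₁ u₂
      have hx : T u₁ - T u₂ = (u₁ - u₂) - t • (a u₁ - a u₂) := by
        simp only [hT]; module
      rw [hx, norm_sub_sq_real, inner_smul_right, norm_smul]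
      have h1 := hmono u₁ u₂
      have h2 := hLip u₁ u₂
      have h3 : ⟪u₁ - u₂, a u₁ - a u₂⟫ = ⟪a u₁ - a u₂, u₁ - u₂⟫ := real_inner_comm _ _
      have h4 : ‖a u₁ - a u₂‖ ^ 2 ≤ M ^ 2 * ‖u₁ - u₂‖ ^ 2 := by
        nlinarith [norm_nonneg (a u₁ - a u₂), norm_nonneg (u₁ - u₂)]
      have h5 : ‖t‖ = t := abs_of_pos htpos
      rw [h3, h5]
      have htc : t ^ 2 * M ^ 2 = t * m := by
        rw [pow_two, mul_assoc, htM]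
      have hc' : c = 1 - t * m := by
        rw [hcdef, ht]; field_simp
      rw [hc']
      nlinarith [mul_le_mul_of_nonneg_left h4 (sq_nonneg t),
        mul_le_mul_of_nonneg_left h1 (le_of_lt htpos)]
    set k : ℝ := Real.sqrt c with hk
    have hk0 : 0 ≤ k := Real.sqrt_nonneg c
    have hkey : ∀ u₁ u₂, ‖T u₁ - T u₂‖ ≤ k * ‖u₁ - u₂‖ := by
      intro u₁ u₂
      have := Real.sqrt_le_sqrt (key u₁ u₂)
      rwa [Real.sqrt_sq (norm_nonneg _), Real.sqrt_mul hc0,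
        Real.sqrt_sq (norm_nonneg _)] at this
    have hcontr : ContractingWith k.toNNReal T := by
      constructor
      · rw [← NNReal.coe_lt_one, Real.coe_toNNReal _ hk0]
        rw [hk, show (1:ℝ) = Real.sqrt 1 by simp]
        exact Real.sqrt_lt_sqrt hc0 hc1
      · apply LipschitzWith.of_dist_le_mul
        intro u₁ u₂
        rw [dist_eq_norm, dist_eq_norm, Real.coe_toNNReal _ hk0]
        exact hkey u₁ u₂
    obtain ⟨x, hxfix⟩ := hcontr.exists_fixedPoint (x := 0) (edist_ne_top _ _)
    refine ⟨x, ?_⟩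
    have : x - t • (a x - y) = x := hxfix.1
    have h0 : t • (a x - y) = 0 := by
      have := sub_eq_self.mp this
      exact this
    rcases smul_eq_zero.mp h0 with h | h
    · exact absurd h (ne_of_gt htpos)
    · exact sub_eq_zero.mp h
  refine ⟨⟨hinj, hsurj⟩, Function.surjInv hsurj, fun v => Function.surjInv_eq hsurj v,
    fun u => hinj (Function.surjInv_eq hsurj (a u)), ?_, ?_⟩
  · intro v₁ v₂
    set u₁ := Function.surjInv hsurj v₁ with hu₁
    set u₂ := Function.surjInv hsurj v₂ with hu₂
    have hv₁ : a u₁ = v₁ := Function.surjInv_eq hsurj v₁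
    have hv₂ : a u₂ = v₂ := Function.surjInv_eq hsurj v₂
    rw [← hv₁, ← hv₂]
    have h1 := hmono u₁ u₂
    have h2 := hLip u₁ u₂
    have h3 : ⟪u₁ - u₂, a u₁ - a u₂⟫ = ⟪a u₁ - a u₂, u₁ - u₂⟫ := real_inner_comm _ _
    rw [h3]
    have hdiv : m / M ^ 2 * M ^ 2 = m := by field_simp
    have h4 : ‖a u₁ - a u₂‖ ^ 2 ≤ M ^ 2 * ‖u₁ - u₂‖ ^ 2 := by
      nlinarith [norm_nonneg (a u₁ - a u₂), norm_nonneg (u₁ - u₂)]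
    have h5 : 0 ≤ m / M ^ 2 := by positivity
    nlinarith [mul_le_mul_of_nonneg_left h4 h5]
  · intro v₁ v₂
    set u₁ := Function.surjInv hsurj v₁ with hu₁
    set u₂ := Function.surjInv hsurj v₂ with hu₂
    have hv₁ : a u₁ = v₁ := Function.surjInv_eq hsurj v₁
    have hv₂ : a u₂ = v₂ := Function.surjInv_eq hsurj v₂
    rw [← hv₁, ← hv₂] at *
    have h1 := hmono u₁ u₂
    have h2 := real_inner_le_norm (a u₁ - a u₂) (u₁ - u₂)
    rcases eq_or_lt_of_le (norm_nonneg (u₁ - u₂)) with h | h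
    · rw [← h]; positivity
    · rw [ge_iff_le, ← sub_nonneg] at h1
      have : m * ‖u₁ - u₂‖ ≤ ‖a u₁ - a u₂‖ := by nlinarith
      rw [one_div, ← div_eq_inv_mul, le_div_iff₀ hm]
      nlinarith
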